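/- Let G=(V,E) be a split graph whose vertex set is partitioned into a clique C and an independent set I, and let f : V → {0,1,2} be a minimal Roman dominating function of G. Then V₂(f) ⊆ C or V₂(f) ⊆ I; that is, V₂(f) cannot contain both a vertex of C and a vertex of I. -/

import Mathlib

/-- A Roman dominating function: every vertex with value 0 has a neighbor with value 2. -/
def IsRDF {V : Type*} (G : SimpleGraph V) (f : V → Fin 3) : Prop :=
  ∀ v, f v = 0 → ∃ u, G.Adj v u ∧ f u = 2

/-- A minimal Roman dominating function: an rdf such that no rdf `g ≠ f` satisfies `g ≤ f`. -/
def IsMinimalRDF {V : Type*} (G : SimpleGraph V) (f : V → Fin 3) : Prop :=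
  IsRDF G f ∧ ∀ g : V → Fin 3, IsRDF G g → g ≤ f → g = f

/-- The number of minimal Roman dominating functions of `G`. -/
noncomputable def numMinRDF {V : Type*} (G : SimpleGraph V) : ℕ :=
  {f : V → Fin 3 | IsMinimalRDF G f}.ncard

/-- In a split graph with clique `C` and independent set `I`, the set `V₂(f)` of a minimal
Roman dominating function cannot contain both a vertex of `C` and a vertex of `I`. -/
theorem splitGraph_V2_subset {V : Type*} [Fintype V] (G : SimpleGraph V) (C I : Set V)
    (hpart : C ∪ I = Set.univ) (hdisj : Disjoint C I)
    (hC : G.IsClique C) (hI : ∀ u ∈ I, ∀ w ∈ I, ¬ G.Adj u w)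
    (f : V → Fin 3) (hf : IsMinimalRDF G f) :
    {v | f v = 2} ⊆ C ∨ {v | f v = 2} ⊆ I := by
  classical
  by_contra h
  push_neg at h
  rw [Set.not_subset, Set.not_subset] at h
  obtain ⟨⟨i, hi2, hiC⟩, ⟨c, hc2, hcI⟩⟩ := h
  simp only [Set.mem_setOf_eq] at hi2 hc2
  have huniv : ∀ v : V, v ∈ C ∨ v ∈ I := by
    intro v
    have : v ∈ C ∪ I := hpart ▸ Set.mem_univ v
    exact this
  have hiI : i ∈ I := (huniv i).resolve_left hiC
  have hcC : c ∈ C := (huniv c).resolve_right hcI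
  set g : V → Fin 3 := fun v => if v = i then 1 else f v with hg
  have hgrdf : IsRDF G g := by
    intro v hv0
    have hvi : v ≠ i := by
      intro h; subst h; simp [hg] at hv0
    have hfv0 : f v = 0 := by simpa [hg, hvi] using hv0
    obtain ⟨u, hadj, hu2⟩ := hf.1 v hfv0
    by_cases hui : u = i
    · rw [hui] at hadj
      -- v is a neighbor of i, so v ∈ C
      have hvC : v ∈ C := by
        rcases huniv v with h | h
        · exact h
        · exact absurd hadj (hI v h i hiI)
      have hvc : v ≠ c := by
        intro h; subst h; rw [hfv0] at hc2; exact absurd hc2 (by decide)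
      have hci : c ≠ i := fun h => hcI (h ▸ hiI)
      exact ⟨c, hC hvC hcC hvc, by simp [hg, hci, hc2]⟩
    · exact ⟨u, hadj, by simp [hg, hui, hu2]⟩
  have hle : g ≤ f := by
    intro v
    by_cases hv : v = i
    · subst hv; simp only [hg, if_pos rfl, hi2]
      exact (by decide : (1 : Fin 3) ≤ 2)
    · simp [hg, hv]
  have := hf.2 g hgrdf hle
  have : g i = f i := congrFun this i
  rw [hi2] at this
  simp [hg] at this
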